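/- For every integer n ≥ 2, the ladder L_n admits a super edge-antimagic total labeling, i.e. a bijection f : V(L_n) ∪ E(L_n) → {1,...,5n−2} with f(V(L_n))={1,...,2n} such that all edge-weights f(u)+f(v)+f(uv) over edges uv are pairwise distinct. -/

import Mathlib

open Sum

/-- The weight of an edge `e` under a total labeling `f` of the graph `G`:
the label of `e` plus the labels of its two endpoints. -/
noncomputable def edgeWt {V : Type*} (G : SimpleGraph V) (f : V ⊕ G.edgeSet → ℕ)
    (e : G.edgeSet) : ℕ :=
  f (inr e) + ∑ᶠ (v : V) (_ : v ∈ (e : Sym2 V)), f (inl v)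

/-- The weight of a vertex `v` under a total labeling `f` of the graph `G`:
the label of `v` plus the labels of all edges incident with `v`. -/
noncomputable def vertexWt {V : Type*} (G : SimpleGraph V) (f : V ⊕ G.edgeSet → ℕ)
    (v : V) : ℕ :=
  f (inl v) + ∑ᶠ (e : G.edgeSet) (_ : v ∈ (e : Sym2 V)), f (inr e)

/-- The ladder `L_n = P_n × P_2`, with vertices `u_i = inl i` and `v_i = inr i`
(`i` running over `Fin n`), edges `u_i u_{i+1}`, `v_i v_{i+1}` and rungs `u_i v_i`. -/
def ladder (n : ℕ) : SimpleGraph (Fin n ⊕ Fin n) :=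
  SimpleGraph.fromRel (fun a b =>
    (∃ p q : Fin n, (p : ℕ) + 1 = (q : ℕ) ∧ a = inl p ∧ b = inl q) ∨
    (∃ p q : Fin n, (p : ℕ) + 1 = (q : ℕ) ∧ a = inr p ∧ b = inr q) ∨
    (∃ p : Fin n, a = inl p ∧ b = inr p))

/-- Given any weight function `s` on a finite type `E`, we can label the elements of `E`
bijectively with `{a+1, ..., a + |E|}`, sorted so that `e ↦ label e + s e` is injective. -/
lemma sorted_label (E : Type*) [Fintype E] (s : E → ℕ) (a : ℕ) :
    ∃ h : E → ℕ,
      Set.BijOn h Set.univ (Set.Icc (a + 1) (a + Fintype.card E)) ∧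
      Function.Injective (fun e => h e + s e) := by
  classical
  set m := Fintype.card E with hm
  let ε : E ≃ Fin m := Fintype.equivFin E
  let σ : Equiv.Perm (Fin m) := Tuple.sort (s ∘ ε.symm)
  let ι : E ≃ Fin m := ε.trans σ⁻¹
  have hmono : Monotone ((s ∘ ε.symm) ∘ σ) := Tuple.monotone_sort _
  refine ⟨fun e => a + 1 + (ι e : ℕ), ⟨?_, ?_, ?_⟩, ?_⟩
  · intro e _
    have := (ι e).isLt
    simp only [Set.mem_Icc]
    omega
  · intro e _ e' _ hee
    have hee' : a + 1 + (ι e : ℕ) = a + 1 + (ι e' : ℕ) := hee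
    have : (ι e : ℕ) = (ι e' : ℕ) := by omega
    exact ι.injective (Fin.ext this)
  · intro k hk
    simp only [Set.mem_Icc] at hk
    have hlt : k - a - 1 < m := by omega
    refine ⟨ι.symm ⟨k - a - 1, hlt⟩, Set.mem_univ _, ?_⟩
    simp only [Equiv.apply_symm_apply]
    omega
  · have key : (fun e => a + 1 + (ι e : ℕ) + s e) =
        (fun i : Fin m => a + 1 + (i : ℕ) + ((s ∘ ε.symm) ∘ σ) i) ∘ ι := by
      funext e
      simp only [Function.comp_apply]
      congr 1
      show s e = s (ε.symm (σ (σ⁻¹ (ε e))))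
      simp
    have hsm : StrictMono (fun i : Fin m => a + 1 + (i : ℕ) + ((s ∘ ε.symm) ∘ σ) i) := by
      intro i j hij
      have h1 := hmono hij.le
      have h2 : (i : ℕ) < j := hij
      simp only
      omega
    exact key ▸ hsm.injective.comp ι.injective

/-- Explicit enumeration of the edges of the ladder. -/
def edg (m : ℕ) : (Fin m ⊕ Fin m ⊕ Fin (m + 1)) → Sym2 (Fin (m + 1) ⊕ Fin (m + 1))
  | inl i => s(inl i.castSucc, inl i.succ)
  | inr (inl i) => s(inr i.castSucc, inr i.succ)
  | inr (inr i) => s(inl i, inr i)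

lemma edg_mem (m : ℕ) (j : Fin m ⊕ Fin m ⊕ Fin (m + 1)) :
    edg m j ∈ (ladder (m + 1)).edgeSet := by
  rcases j with i | i | i <;>
    simp only [edg, SimpleGraph.mem_edgeSet, ladder, SimpleGraph.fromRel_adj]
  · exact ⟨by simp [Fin.ext_iff, Fin.val_succ],
      Or.inl (Or.inl ⟨i.castSucc, i.succ, by simp, rfl, rfl⟩)⟩
  · exact ⟨by simp [Fin.ext_iff, Fin.val_succ],
      Or.inl (Or.inr (Or.inl ⟨i.castSucc, i.succ, by simp, rfl, rfl⟩))⟩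
  · exact ⟨by simp, Or.inl (Or.inr (Or.inr ⟨i, rfl, rfl⟩))⟩

lemma edg_inj (m : ℕ) : Function.Injective (edg m) := by
  intro j j' h
  rcases j with i | i | i <;> rcases j' with i' | i' | i' <;>
    simp only [edg, Sym2.eq_iff] at h <;>
    simp_all [Fin.ext_iff] <;> omega

lemma edg_surj (m : ℕ) (e : Sym2 (Fin (m + 1) ⊕ Fin (m + 1)))
    (he : e ∈ (ladder (m + 1)).edgeSet) : ∃ j, edg m j = e := by
  induction e with
  | _ a b =>
    rw [SimpleGraph.mem_edgeSet, ladder, SimpleGraph.fromRel_adj] at he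
    obtain ⟨hne, hr⟩ := he
    have key : ∀ a b : Fin (m+1) ⊕ Fin (m+1),
        ((∃ p q : Fin (m+1), (p : ℕ) + 1 = (q : ℕ) ∧ a = inl p ∧ b = inl q) ∨
         (∃ p q : Fin (m+1), (p : ℕ) + 1 = (q : ℕ) ∧ a = inr p ∧ b = inr q) ∨
         (∃ p : Fin (m+1), a = inl p ∧ b = inr p)) → ∃ j, edg m j = s(a, b) := by
      rintro a b (⟨p, q, hpq, rfl, rfl⟩ | ⟨p, q, hpq, rfl, rfl⟩ | ⟨p, rfl, rfl⟩)
      · have hp : (p : ℕ) < m := by have := q.isLt; omega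
        refine ⟨inl ⟨p, hp⟩, ?_⟩
        simp [edg, Sym2.eq_iff, Fin.ext_iff, Fin.val_succ, hpq]
      · have hp : (p : ℕ) < m := by have := q.isLt; omega
        refine ⟨inr (inl ⟨p, hp⟩), ?_⟩
        simp [edg, Sym2.eq_iff, Fin.ext_iff, Fin.val_succ, hpq]
      · exact ⟨inr (inr p), rfl⟩
    rcases hr with hr | hr
    · exact key a b hr
    · obtain ⟨j, hj⟩ := key b a hr
      exact ⟨j, hj.trans (Sym2.eq_swap)⟩

/-- The edges of the ladder are in bijection with the index type. -/
noncomputable def edgEquiv (m : ℕ) :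
    (Fin m ⊕ Fin m ⊕ Fin (m + 1)) ≃ (ladder (m + 1)).edgeSet :=
  Equiv.ofBijective (fun j => ⟨edg m j, edg_mem m j⟩)
    ⟨fun _ _ h => edg_inj m (congrArg Subtype.val h),
     fun e => by obtain ⟨j, hj⟩ := edg_surj m e e.2; exact ⟨j, Subtype.ext hj⟩⟩

/-- For every `n ≥ 2` the ladder `L_n` admits a super edge-antimagic total labeling. -/
theorem ladder_super_EAT (n : ℕ) (hn : 2 ≤ n) :
    ∃ f : (Fin n ⊕ Fin n) ⊕ (ladder n).edgeSet → ℕ,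
      Set.BijOn f Set.univ (Set.Icc 1 (5 * n - 2)) ∧
      Set.BijOn (fun v => f (inl v)) Set.univ (Set.Icc 1 (2 * n)) ∧
      Function.Injective (edgeWt (ladder n) f) := by
  classical
  obtain ⟨m, rfl⟩ : ∃ m, n = m + 1 := ⟨n - 1, by omega⟩
  set V := Fin (m + 1) ⊕ Fin (m + 1)
  letI : Fintype (ladder (m + 1)).edgeSet := Fintype.ofEquiv _ (edgEquiv m)
  have hcard : Fintype.card (ladder (m + 1)).edgeSet = 3 * m + 1 := by
    rw [← Fintype.card_congr (edgEquiv m)]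
    simp
    omega
  -- vertex labels
  let vl : V → ℕ := fun v => (finSumFinEquiv v : ℕ) + 1
  have hvl : Set.BijOn vl Set.univ (Set.Icc 1 (2 * (m + 1))) := by
    refine ⟨?_, ?_, ?_⟩
    · intro v _
      have := (finSumFinEquiv v).isLt
      simp only [Set.mem_Icc, vl]
      omega
    · intro v _ v' _ hvv
      have hvv' : (finSumFinEquiv v : ℕ) + 1 = (finSumFinEquiv v' : ℕ) + 1 := hvv
      exact finSumFinEquiv.injective (Fin.ext (by omega))
    · intro k hk
      simp only [Set.mem_Icc] at hk
      have hlt : k - 1 < m + 1 + (m + 1) := by omega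
      refine ⟨finSumFinEquiv.symm ⟨k - 1, hlt⟩, Set.mem_univ _, ?_⟩
      simp only [vl, Equiv.apply_symm_apply]
      omega
  -- edge labels
  obtain ⟨h, hbij, hinj⟩ := sorted_label ((ladder (m + 1)).edgeSet)
    (fun e => ∑ᶠ (v : V) (_ : v ∈ (e : Sym2 V)), vl v) (2 * (m + 1))
  rw [hcard] at hbij
  have h53 : 2 * (m + 1) + (3 * m + 1) = 5 * (m + 1) - 2 := by omega
  refine ⟨Sum.elim vl h, ⟨?_, ?_, ?_⟩, hvl, ?_⟩
  · rintro (v | e) _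
    · have := hvl.1 (Set.mem_univ v)
      simp only [Set.mem_Icc] at this ⊢
      simp only [Sum.elim_inl]
      omega
    · have := hbij.1 (Set.mem_univ e)
      simp only [Set.mem_Icc] at this ⊢
      simp only [Sum.elim_inr]
      omega
  · rintro (v | e) _ (v' | e') _ hvv
    · exact congrArg inl (hvl.2.1 (Set.mem_univ v) (Set.mem_univ v') hvv)
    · exfalso
      have h1 := hvl.1 (Set.mem_univ v)
      have h2 := hbij.1 (Set.mem_univ e')
      simp only [Set.mem_Icc] at h1 h2
      simp only [Sum.elim_inl, Sum.elim_inr] at hvv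
      omega
    · exfalso
      have h1 := hvl.1 (Set.mem_univ v')
      have h2 := hbij.1 (Set.mem_univ e)
      simp only [Set.mem_Icc] at h1 h2
      simp only [Sum.elim_inl, Sum.elim_inr] at hvv
      omega
    · exact congrArg inr (hbij.2.1 (Set.mem_univ e) (Set.mem_univ e') hvv)
  · intro k hk
    simp only [Set.mem_Icc] at hk
    by_cases hk2 : k ≤ 2 * (m + 1)
    · obtain ⟨v, _, hv⟩ := hvl.2.2 (by simp only [Set.mem_Icc]; omega : k ∈ Set.Icc 1 (2 * (m + 1)))
      exact ⟨inl v, Set.mem_univ _, hv⟩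
    · obtain ⟨e, _, he⟩ := hbij.2.2 (by simp only [Set.mem_Icc]; omega :
        k ∈ Set.Icc (2 * (m + 1) + 1) (2 * (m + 1) + (3 * m + 1)))
      exact ⟨inr e, Set.mem_univ _, he⟩
  · have : edgeWt (ladder (m + 1)) (Sum.elim vl h) =
        fun e => h e + ∑ᶠ (v : V) (_ : v ∈ (e : Sym2 V)), vl v := by
      funext e
      simp only [edgeWt, Sum.elim_inr, Sum.elim_inl]
      rfl
    rw [this]
    exact hinj
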